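/- (Length of image circles tends to zero.) Let f : B_1(0)\{0} → ℂ be holomorphic with finite energy, and for 0 < r < 1/2 let γ_r(θ) = f(r e^{iθ}), θ ∈ [0, 2π]. Suppose the mean value inequality |f'(z)|² ≤ (C/ρ²)∫_{B_ρ(z)}|f'|² holds for all discs B_ρ(z) ⊆ B_1(0)\{0}. Then length(γ_r)² ≤ 8π²C · ∫_{B_{2r}(0)\{0}} |f'|², and in particular length(γ_r) → 0 as r → 0. -/

import Mathlib

open MeasureTheory Metric Filter Real

/-- Pointwise bound on the derivative of the loop. -/
lemma stmt_11_ptwise (f : ℂ → ℂ) (C : ℝ) (hC : 0 < C)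
    (hf : DifferentiableOn ℂ f (ball (0 : ℂ) 1 \ {0}))
    (hE : IntegrableOn (fun z => ‖deriv f z‖ ^ 2) (ball (0 : ℂ) 1 \ {0}))
    (hmv : ∀ (z : ℂ) (ρ : ℝ), 0 < ρ → ball z ρ ⊆ ball (0 : ℂ) 1 \ {0} →
      ‖deriv f z‖ ^ 2 ≤ (C / ρ ^ 2) * ∫ w in ball z ρ, ‖deriv f w‖ ^ 2)
    (r : ℝ) (hr : 0 < r) (hr2 : r < 1 / 2) (θ : ℝ) :
    ‖deriv (fun θ : ℝ => f ((r : ℂ) * Complex.exp (θ * Complex.I))) θ‖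
      ≤ Real.sqrt (C * ∫ z in ball (0 : ℂ) (2 * r) \ {0}, ‖deriv f z‖ ^ 2) := by
  set z : ℂ := (r : ℂ) * Complex.exp (θ * Complex.I) with hzdef
  have hznorm : ‖z‖ = r := by
    rw [hzdef, norm_mul, Complex.norm_real, Complex.norm_exp_ofReal_mul_I,
      Real.norm_eq_abs, abs_of_pos hr, mul_one]
  have hsub : ball z r ⊆ ball (0 : ℂ) (2 * r) \ {0} := by
    intro w hw
    rw [mem_ball] at hw
    constructor
    · rw [mem_ball, dist_zero_right]
      calc ‖w‖ ≤ ‖w - z‖ + ‖z‖ := by simpa using norm_add_le (w - z) z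
        _ < r + r := by
            rw [hznorm]
            exact add_lt_add_left (by simpa [dist_eq_norm] using hw) r
        _ = 2 * r := by ring
    · intro hw0
      rw [Set.mem_singleton_iff] at hw0
      rw [hw0, dist_comm, dist_zero_right, hznorm] at hw
      exact lt_irrefl r hw
  have hsub1 : ball z r ⊆ ball (0 : ℂ) 1 \ {0} :=
    hsub.trans (Set.diff_subset_diff_left (ball_subset_ball (by linarith)))
  have hz_mem : z ∈ ball (0 : ℂ) 1 \ {0} := hsub1 (mem_ball_self hr)
  have hDopen : IsOpen (ball (0 : ℂ) 1 \ {0}) := isOpen_ball.sdiff isClosed_singleton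
  -- derivative computation
  have hfz : HasDerivAt f (deriv f z) z :=
    (hf.differentiableAt (hDopen.mem_nhds hz_mem)).hasDerivAt
  have h1 : HasDerivAt (fun θ : ℝ => (θ : ℂ) * Complex.I) Complex.I θ := by
    simpa using (Complex.ofRealCLM.hasDerivAt (x := θ)).mul_const Complex.I
  have h2 : HasDerivAt (fun θ : ℝ => Complex.exp ((θ : ℂ) * Complex.I))
      (Complex.exp ((θ : ℂ) * Complex.I) * Complex.I) θ := h1.cexp
  have h3 : HasDerivAt (fun θ : ℝ => (r : ℂ) * Complex.exp ((θ : ℂ) * Complex.I))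
      ((r : ℂ) * (Complex.exp ((θ : ℂ) * Complex.I) * Complex.I)) θ := h2.const_mul _
  have hcomp := hfz.scomp θ h3
  have hderiv : deriv (fun θ : ℝ => f ((r : ℂ) * Complex.exp (θ * Complex.I))) θ
      = ((r : ℂ) * (Complex.exp ((θ : ℂ) * Complex.I) * Complex.I)) • deriv f z := by
    have := hcomp.deriv
    rwa [Function.comp_def] at this
  have hnorm : ‖deriv (fun θ : ℝ => f ((r : ℂ) * Complex.exp (θ * Complex.I))) θ‖
      = r * ‖deriv f z‖ := by
    rw [hderiv, norm_smul, norm_mul, norm_mul, Complex.norm_real,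
      Complex.norm_exp_ofReal_mul_I, Complex.norm_I, Real.norm_eq_abs, abs_of_pos hr]
    ring
  -- mean value inequality and energy monotonicity
  have hEr : IntegrableOn (fun z => ‖deriv f z‖ ^ 2) (ball (0 : ℂ) (2 * r) \ {0}) :=
    hE.mono_set (Set.diff_subset_diff_left (ball_subset_ball (by linarith)))
  have hmono : (∫ w in ball z r, ‖deriv f w‖ ^ 2)
      ≤ ∫ w in ball (0 : ℂ) (2 * r) \ {0}, ‖deriv f w‖ ^ 2 := by
    apply setIntegral_mono_set hEr
    · exact Filter.Eventually.of_forall fun w => by positivity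
    · exact HasSubset.Subset.eventuallyLE hsub
  have hmvz := hmv z r hr hsub1
  have hzbound : ‖deriv f z‖ ^ 2
      ≤ (C / r ^ 2) * ∫ w in ball (0 : ℂ) (2 * r) \ {0}, ‖deriv f w‖ ^ 2 :=
    hmvz.trans (mul_le_mul_of_nonneg_left hmono (by positivity))
  have hsq : (r * ‖deriv f z‖) ^ 2
      ≤ C * ∫ w in ball (0 : ℂ) (2 * r) \ {0}, ‖deriv f w‖ ^ 2 := by
    calc (r * ‖deriv f z‖) ^ 2 = r ^ 2 * ‖deriv f z‖ ^ 2 := by ring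
      _ ≤ r ^ 2 * ((C / r ^ 2) * ∫ w in ball (0 : ℂ) (2 * r) \ {0}, ‖deriv f w‖ ^ 2) :=
          mul_le_mul_of_nonneg_left hzbound (by positivity)
      _ = C * ∫ w in ball (0 : ℂ) (2 * r) \ {0}, ‖deriv f w‖ ^ 2 := by
          field_simp
  rw [hnorm]
  have := Real.sqrt_le_sqrt hsq
  rwa [Real.sqrt_sq (by positivity)] at this

theorem stmt_11 (f : ℂ → ℂ) (C : ℝ) (hC : 0 < C)
    (hf : DifferentiableOn ℂ f (ball (0 : ℂ) 1 \ {0}))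
    (hE : IntegrableOn (fun z => ‖deriv f z‖ ^ 2) (ball (0 : ℂ) 1 \ {0}))
    (hmv : ∀ (z : ℂ) (ρ : ℝ), 0 < ρ → ball z ρ ⊆ ball (0 : ℂ) 1 \ {0} →
      ‖deriv f z‖ ^ 2 ≤ (C / ρ ^ 2) * ∫ w in ball z ρ, ‖deriv f w‖ ^ 2) :
    (∀ r : ℝ, 0 < r → r < 1 / 2 →
      (∫ θ in (0 : ℝ)..(2 * π),
          ‖deriv (fun θ : ℝ => f ((r : ℂ) * Complex.exp (θ * Complex.I))) θ‖) ^ 2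
        ≤ 8 * π ^ 2 * C * ∫ z in ball (0 : ℂ) (2 * r) \ {0}, ‖deriv f z‖ ^ 2) ∧
    Tendsto (fun r : ℝ => ∫ θ in (0 : ℝ)..(2 * π),
        ‖deriv (fun θ : ℝ => f ((r : ℂ) * Complex.exp (θ * Complex.I))) θ‖)
      (nhdsWithin 0 (Set.Ioi 0)) (nhds 0) := by
  have hπ : (0 : ℝ) < π := Real.pi_pos
  -- notation
  set F : ℝ → ℝ := fun r => ∫ z in ball (0 : ℂ) (2 * r) \ {0}, ‖deriv f z‖ ^ 2 with hF
  have hFnonneg : ∀ r, 0 ≤ F r := fun r =>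
    setIntegral_nonneg (measurableSet_ball.diff (measurableSet_singleton 0))
      (fun w _ => by positivity)
  -- integral bound
  have hIbound : ∀ r : ℝ, 0 < r → r < 1 / 2 →
      (∫ θ in (0 : ℝ)..(2 * π),
        ‖deriv (fun θ : ℝ => f ((r : ℂ) * Complex.exp (θ * Complex.I))) θ‖)
      ≤ Real.sqrt (C * F r) * (2 * π) := by
    intro r hr hr2
    have hb := intervalIntegral.norm_integral_le_of_norm_le_const
      (C := Real.sqrt (C * F r))
      (f := fun θ : ℝ => ‖deriv (fun θ : ℝ => f ((r : ℂ) * Complex.exp (θ * Complex.I))) θ‖)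
      (a := 0) (b := 2 * π)
      (fun θ _ => by rw [norm_norm]; exact stmt_11_ptwise f C hC hf hE hmv r hr hr2 θ)
    rw [sub_zero, abs_of_pos (by positivity)] at hb
    exact (le_abs_self _).trans hb
  have hInonneg : ∀ r : ℝ,
      0 ≤ ∫ θ in (0 : ℝ)..(2 * π),
        ‖deriv (fun θ : ℝ => f ((r : ℂ) * Complex.exp (θ * Complex.I))) θ‖ := by
    intro r
    exact intervalIntegral.integral_nonneg (by positivity) (fun θ _ => norm_nonneg _)
  constructor
  · intro r hr hr2
    have h1 := hIbound r hr hr2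
    have h0 := hInonneg r
    have hsq : (∫ θ in (0 : ℝ)..(2 * π),
        ‖deriv (fun θ : ℝ => f ((r : ℂ) * Complex.exp (θ * Complex.I))) θ‖) ^ 2
        ≤ (Real.sqrt (C * F r) * (2 * π)) ^ 2 := by
      apply pow_le_pow_left₀ h0 h1
    have hCF : 0 ≤ C * F r := mul_nonneg hC.le (hFnonneg r)
    calc (∫ θ in (0 : ℝ)..(2 * π),
        ‖deriv (fun θ : ℝ => f ((r : ℂ) * Complex.exp (θ * Complex.I))) θ‖) ^ 2
        ≤ (Real.sqrt (C * F r) * (2 * π)) ^ 2 := hsq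
      _ = (C * F r) * (4 * π ^ 2) := by
          rw [mul_pow, Real.sq_sqrt hCF]; ring
      _ ≤ 8 * π ^ 2 * C * F r := by nlinarith [hFnonneg r, sq_nonneg π]
  · -- the tendsto part
    have hμ : Tendsto (fun r : ℝ =>
        (volume.restrict (ball (0 : ℂ) 1 \ {0})) (ball (0 : ℂ) (2 * r) \ {0}))
        (nhdsWithin 0 (Set.Ioi 0)) (nhds 0) := by
      have hub : ∀ r : ℝ,
          (volume.restrict (ball (0 : ℂ) 1 \ {0})) (ball (0 : ℂ) (2 * r) \ {0})
          ≤ ENNReal.ofReal (2 * r) ^ 2 * NNReal.pi := by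
        intro r
        calc (volume.restrict (ball (0 : ℂ) 1 \ {0})) (ball (0 : ℂ) (2 * r) \ {0})
            ≤ volume (ball (0 : ℂ) (2 * r) \ {0}) := Measure.restrict_apply_le _ _
          _ ≤ volume (ball (0 : ℂ) (2 * r)) := measure_mono Set.diff_subset
          _ = ENNReal.ofReal (2 * r) ^ 2 * NNReal.pi := Complex.volume_ball 0 (2 * r)
      have hub_tendsto : Tendsto (fun r : ℝ => ENNReal.ofReal (2 * r) ^ 2 * NNReal.pi)
          (nhdsWithin 0 (Set.Ioi 0)) (nhds 0) := by
        have h2r : Tendsto (fun r : ℝ => 2 * r) (nhdsWithin 0 (Set.Ioi 0)) (nhds 0) := by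
          have h : Tendsto (fun r : ℝ => 2 * r) (nhds 0) (nhds (2 * 0 : ℝ)) :=
            (continuous_const.mul continuous_id).tendsto (0 : ℝ)
          rw [mul_zero] at h
          exact h.mono_left nhdsWithin_le_nhds
        have hof : Tendsto (fun r : ℝ => ENNReal.ofReal (2 * r))
            (nhdsWithin 0 (Set.Ioi 0)) (nhds 0) := by
          simpa [Function.comp_def] using (ENNReal.continuous_ofReal.tendsto 0).comp h2r
        have hpow : Tendsto (fun r : ℝ => ENNReal.ofReal (2 * r) ^ 2)
            (nhdsWithin 0 (Set.Ioi 0)) (nhds 0) := by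
          simpa using ENNReal.Tendsto.pow (n := 2) hof
        have hfin := ENNReal.Tendsto.mul_const hpow
          (Or.inr (ENNReal.coe_ne_top (r := NNReal.pi)))
        simpa using hfin
      exact tendsto_of_tendsto_of_tendsto_of_le_of_le tendsto_const_nhds hub_tendsto
        (fun r => zero_le) hub
    have hlim := hE.tendsto_setIntegral_nhds_zero hμ
    have hFlim : Tendsto F (nhdsWithin 0 (Set.Ioi 0)) (nhds 0) := by
      apply hlim.congr'
      filter_upwards [Ioo_mem_nhdsGT_of_mem
        (by norm_num : (0:ℝ) ∈ Set.Ico (0:ℝ) (1/2))] with r hr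
      have hsub : ball (0 : ℂ) (2 * r) \ {0} ⊆ ball (0 : ℂ) 1 \ {0} :=
        Set.diff_subset_diff_left (ball_subset_ball (by linarith [hr.2]))
      rw [hF]
      simp only
      rw [Measure.restrict_restrict (measurableSet_ball.diff (measurableSet_singleton 0)),
        Set.inter_eq_left.mpr hsub]
    -- squeeze
    have hg_tendsto : Tendsto (fun r : ℝ => Real.sqrt (C * F r) * (2 * π))
        (nhdsWithin 0 (Set.Ioi 0)) (nhds 0) := by
      have h1 : Tendsto (fun r : ℝ => C * F r) (nhdsWithin 0 (Set.Ioi 0)) (nhds 0) := by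
        simpa using hFlim.const_mul C
      have h2 : Tendsto (fun r : ℝ => Real.sqrt (C * F r))
          (nhdsWithin 0 (Set.Ioi 0)) (nhds 0) := by
        have := (Real.continuous_sqrt.tendsto 0).comp h1
        simpa [Function.comp_def] using this
      simpa using h2.mul_const (2 * π)
    apply squeeze_zero' (Filter.Eventually.of_forall hInonneg) _ hg_tendsto
    filter_upwards [Ioo_mem_nhdsGT_of_mem
      (by norm_num : (0:ℝ) ∈ Set.Ico (0:ℝ) (1/2))] with r hr
    exact hIbound r hr.1 hr.2
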